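/- Let F be a finite family of finite sets, each of size at most r, and suppose F contains no sunflower with t petals (t ≥ 1). Then |F| ≤ r! · (t-1)^r. -/

import Mathlib

open Finset

private def NoSun {α : Type*} [DecidableEq α] (t : ℕ) (F : Finset (Finset α)) : Prop :=
  ¬ ∃ S ⊆ F, S.card = t ∧ ∃ C : Finset α, ∀ A ∈ S, ∀ B ∈ S, A ≠ B → A ∩ B = C

private lemma noSun_lift {α : Type*} [DecidableEq α] (x : α) (t : ℕ)
    (F : Finset (Finset α)) (h : NoSun t F) :
    NoSun t ((F.filter (fun A => x ∈ A)).image (fun A => A.erase x)) := by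
  rintro ⟨S, hS, hScard, C, hC⟩
  have hxmem : ∀ a ∈ S, x ∉ a := by
    intro a ha
    obtain ⟨A', _, rfl⟩ := mem_image.mp (hS ha)
    exact notMem_erase _ _
  refine h ⟨S.image (insert x ·), ?_, ?_, insert x C, ?_⟩
  · intro A hA
    obtain ⟨B, hB, rfl⟩ := mem_image.mp hA
    obtain ⟨A', hA', rfl⟩ := mem_image.mp (hS hB)
    simp only [mem_filter] at hA'
    rw [Finset.insert_erase hA'.2]
    exact hA'.1
  · rw [card_image_of_injOn, hScard]
    intro a ha b hb hab
    have hxa : x ∉ a := hxmem a ha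
    have hxb : x ∉ b := hxmem b hb
    have hab' : insert x a = insert x b := hab
    have h2 : (insert x a).erase x = (insert x b).erase x := by rw [hab']
    rwa [erase_insert hxa, erase_insert hxb] at h2
  · intro A hA B hB hAB
    obtain ⟨a, ha, rfl⟩ := mem_image.mp hA
    obtain ⟨b, hb, rfl⟩ := mem_image.mp hB
    have hxa : x ∉ a := hxmem a ha
    have hxb : x ∉ b := hxmem b hb
    have hab : a ≠ b := by rintro rfl; exact hAB rfl
    have hins : insert x a ∩ insert x b = insert x (a ∩ b) := by
      ext y; simp only [mem_inter, mem_insert]; tauto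
    rw [hins, hC a ha b hb hab]

private lemma sunflower_main {α : Type*} [DecidableEq α] :
    ∀ (r u : ℕ) (F : Finset (Finset α)), (∀ A ∈ F, A.card ≤ r) → NoSun (u + 2) F →
      F.card ≤ r.factorial * (u + 1) ^ r := by
  intro r
  induction r with
  | zero =>
    intro u F hcard _
    have hsub : F ⊆ {∅} := by
      intro A hA
      simp only [mem_singleton]
      exact card_eq_zero.mp (Nat.le_zero.mp (hcard A hA))
    simpa using card_le_card hsub
  | succ r ih =>
    intro u F hcard hsf
    classical
    set 𝒟 := F.powerset.filter (fun D => ∀ A ∈ D, ∀ B ∈ D, A ≠ B → A ∩ B = ∅) with h𝒟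
    have hne : 𝒟.Nonempty := ⟨∅, by simp [h𝒟]⟩
    obtain ⟨D, hD𝒟, hDmax⟩ := 𝒟.exists_max_image card hne
    rw [h𝒟, mem_filter, mem_powerset] at hD𝒟
    obtain ⟨hDF, hDdisj⟩ := hD𝒟
    have hDcard : D.card ≤ u + 1 := by
      by_contra hc
      push_neg at hc
      obtain ⟨S, hSD, hScard⟩ := Finset.exists_subset_card_eq (s := D) (n := u + 2) (by omega)
      exact hsf ⟨S, fun A hA => hDF (hSD hA), hScard, ∅,
        fun A hA B hB hAB => hDdisj A (hSD hA) B (hSD hB) hAB⟩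
    set Y := D.biUnion id with hY
    have hmaxins : ∀ A ∈ F, A ∉ D → (∀ B ∈ D, A ∩ B = ∅) → False := by
      intro A hAF hAD hdisj
      have hmem : insert A D ∈ 𝒟 := by
        rw [h𝒟, mem_filter, mem_powerset]
        refine ⟨insert_subset hAF hDF, ?_⟩
        intro P hP Q hQ hPQ
        rcases mem_insert.mp hP with hP0 | hP0
        · rcases mem_insert.mp hQ with hQ0 | hQ0
          · exact absurd (hP0.trans hQ0.symm) hPQ
          · subst hP0; exact hdisj Q hQ0
        · rcases mem_insert.mp hQ with hQ0 | hQ0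
          · subst hQ0; rw [inter_comm]; exact hdisj P hP0
          · exact hDdisj P hP0 Q hQ0 hPQ
      have hle := hDmax _ hmem
      rw [card_insert_of_notMem hAD] at hle
      omega
    have hcover : ∀ A ∈ F, A = ∅ ∨ ∃ x ∈ Y, x ∈ A := by
      intro A hAF
      by_contra hc
      push_neg at hc
      obtain ⟨hAne, hAY⟩ := hc
      by_cases hAD : A ∈ D
      · obtain ⟨x, hx⟩ := hAne
        exact hAY x (mem_biUnion.mpr ⟨A, hAD, hx⟩) hx
      · apply hmaxins A hAF hAD
        intro B hB
        ext y
        simp only [mem_inter, notMem_empty, iff_false, not_and]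
        exact fun hyA hyB => absurd hyA (hAY y (mem_biUnion.mpr ⟨B, hB, hyB⟩))
    have hxbound : ∀ x : α,
        (F.filter (fun A => x ∈ A)).card ≤ r.factorial * (u + 1) ^ r := by
      intro x
      have hinj : Set.InjOn (fun A => Finset.erase A x)
          ↑(F.filter (fun A => x ∈ A)) := by
        intro a ha b hb hab
        simp only [coe_filter, Set.mem_setOf_eq] at ha hb
        have hab' : a.erase x = b.erase x := hab
        rw [← insert_erase ha.2, hab', insert_erase hb.2]
      rw [← Finset.card_image_of_injOn hinj]
      apply ih u
      · intro B hB
        obtain ⟨A, hA, rfl⟩ := mem_image.mp hB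
        simp only [mem_filter] at hA
        rw [card_erase_of_mem hA.2]
        have := hcard A hA.1
        omega
      · exact noSun_lift x (u + 2) F hsf
    have hM : 1 ≤ r.factorial * (u + 1) ^ r :=
      Nat.one_le_iff_ne_zero.mpr (by positivity)
    have hsumY : ∀ T : Finset α,
        (T.biUnion (fun x => F.filter (fun A => x ∈ A))).card
          ≤ T.card * (r.factorial * (u + 1) ^ r) := by
      intro T
      calc (T.biUnion (fun x => F.filter (fun A => x ∈ A))).card
          ≤ ∑ x ∈ T, (F.filter (fun A => x ∈ A)).card := card_biUnion_le
        _ ≤ T.card * (r.factorial * (u + 1) ^ r) := by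
            have := Finset.sum_le_card_nsmul T _ _ (fun x _ => hxbound x)
            simpa using this
    by_cases hemp : (∅ : Finset α) ∈ F
    · -- empty set is in F
      have hempD : (∅ : Finset α) ∈ D := by
        by_contra hempD
        exact hmaxins ∅ hemp hempD (fun B hB => empty_inter B)
      have hYcard : Y.card ≤ u * (r + 1) := by
        have h1 : Y.card ≤ ∑ A ∈ D.erase ∅, A.card := by
          calc Y.card ≤ ∑ A ∈ D, A.card := card_biUnion_le
            _ = ∑ A ∈ D.erase ∅, A.card := by
                rw [← Finset.sum_erase_add D _ hempD]; simp
        have h2 : ∑ A ∈ D.erase ∅, A.card ≤ (D.erase ∅).card * (r + 1) := by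
          have := Finset.sum_le_card_nsmul (D.erase ∅) (fun A => A.card) (r + 1)
            (fun A hA => hcard A (hDF (mem_of_mem_erase hA)))
          simpa using this
        have h3 : (D.erase ∅).card ≤ u := by
          rw [card_erase_of_mem hempD]; omega
        calc Y.card ≤ _ := h1
          _ ≤ _ := h2
          _ ≤ u * (r + 1) := Nat.mul_le_mul_right _ h3
      have hsub : F ⊆ insert ∅ (Y.biUnion (fun x => F.filter (fun A => x ∈ A))) := by
        intro A hA
        rcases hcover A hA with rfl | ⟨x, hxY, hxA⟩
        · exact mem_insert_self _ _
        · exact mem_insert_of_mem (mem_biUnion.mpr ⟨x, hxY, mem_filter.mpr ⟨hA, hxA⟩⟩)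
      have hF1 : F.card ≤ 1 + u * (r + 1) * (r.factorial * (u + 1) ^ r) := by
        have h4 := card_le_card hsub
        have h5 := card_insert_le (∅ : Finset α)
          (Y.biUnion (fun x => F.filter (fun A => x ∈ A)))
        have h6 := hsumY Y
        have h7 := Nat.mul_le_mul_right (r.factorial * (u + 1) ^ r) hYcard
        omega
      calc F.card ≤ 1 + u * (r + 1) * (r.factorial * (u + 1) ^ r) := hF1
        _ ≤ (r + 1) * (u + 1) * (r.factorial * (u + 1) ^ r) := by nlinarith [hM]
        _ = (r + 1).factorial * (u + 1) ^ (r + 1) := by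
            rw [Nat.factorial_succ, pow_succ]; ring
    · -- empty set not in F
      have hsub : F ⊆ Y.biUnion (fun x => F.filter (fun A => x ∈ A)) := by
        intro A hA
        rcases hcover A hA with rfl | ⟨x, hxY, hxA⟩
        · exact absurd hA hemp
        · exact mem_biUnion.mpr ⟨x, hxY, mem_filter.mpr ⟨hA, hxA⟩⟩
      have hYcard : Y.card ≤ (u + 1) * (r + 1) := by
        calc Y.card ≤ ∑ A ∈ D, A.card := card_biUnion_le
          _ ≤ D.card * (r + 1) := by
              have := Finset.sum_le_card_nsmul D (fun A => A.card) (r + 1)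
                (fun A hA => hcard A (hDF hA))
              simpa using this
          _ ≤ (u + 1) * (r + 1) := Nat.mul_le_mul_right _ hDcard
      calc F.card ≤ (Y.biUnion (fun x => F.filter (fun A => x ∈ A))).card :=
            card_le_card hsub
        _ ≤ Y.card * (r.factorial * (u + 1) ^ r) := hsumY Y
        _ ≤ (u + 1) * (r + 1) * (r.factorial * (u + 1) ^ r) :=
            Nat.mul_le_mul_right _ hYcard
        _ = (r + 1).factorial * (u + 1) ^ (r + 1) := by
            rw [Nat.factorial_succ, pow_succ]; ring

theorem stmt_13 {α : Type*} [DecidableEq α] (r t : ℕ) (ht : 1 ≤ t)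
    (F : Finset (Finset α)) (hcard : ∀ A ∈ F, A.card ≤ r)
    (hsf : ¬ ∃ S ⊆ F, S.card = t ∧
      ∃ C : Finset α, ∀ A ∈ S, ∀ B ∈ S, A ≠ B → A ∩ B = C) :
    F.card ≤ r.factorial * (t - 1) ^ r := by
  rcases Nat.lt_or_ge t 2 with h | h
  · -- t = 1 : F must be empty
    have ht1 : t = 1 := by omega
    subst ht1
    have hF : F = ∅ := by
      by_contra hne
      obtain ⟨A, hA⟩ := nonempty_iff_ne_empty.mpr hne
      refine hsf ⟨{A}, singleton_subset_iff.mpr hA, card_singleton A, ∅, ?_⟩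
      intro P hP Q hQ hPQ
      simp only [mem_singleton] at hP hQ
      subst hP; subst hQ
      exact absurd rfl hPQ
    simp [hF]
  · obtain ⟨u, rfl⟩ : ∃ u, t = u + 2 := ⟨t - 2, by omega⟩
    have h1 : (u + 2) - 1 = u + 1 := by omega
    rw [h1]
    exact sunflower_main r u F hcard hsf
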